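/- arXiv:2601.17618 — 2 statements merged into one kernel-verified Lean document; each statement's English description precedes it below -/
import Mathlib

section
/- Let E be a random vector in ℝ^q with i.i.d. Rademacher coordinates (each ±1 with probability 1/2), and let g : ℝ^q → ℝ be three times continuously differentiable near θ. Then for the simultaneous-perturbation estimator H_δ = (g(θ + δE) − g(θ − δE)) / (2δ) · E⁻ᵀ, where E⁻¹ is the coordinatewise reciprocal of E, the expectation satisfies E[H_δ]ᵢ = ∂g/∂θᵢ (θ) + O(δ²) as δ → 0; in the special case where g is a quadratic polynomial, E[H_δ] equals ∇g(θ) exactly. -/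
open Filter Topology Matrix Finset

lemma iterDWithin_Icc_eq {f : ℝ → ℝ} {u : Set ℝ} (hu : IsOpen u) (hf : ContDiffOn ℝ 3 f u)
    {a b : ℝ} (hab : a < b) (hsub : Set.Icc a b ⊆ u) {x : ℝ} (hx : x ∈ Set.Icc a b)
    {k : ℕ} (hk : k ≤ 3) :
    iteratedDerivWithin k f (Set.Icc a b) x = iteratedDeriv k f x := by
  have h1 := hf.ftaylorSeriesWithin hu.uniqueDiffOn
  have h2 := (h1.mono hsub).eq_iteratedFDerivWithin_of_uniqueDiffOn (by exact_mod_cast hk) (uniqueDiffOn_Icc hab) hx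
  have h3 : ftaylorSeriesWithin ℝ f u x k = iteratedFDeriv ℝ k f x :=
    iteratedFDerivWithin_of_isOpen (𝕜 := ℝ) (f := f) k hu (hsub hx)
  rw [iteratedDerivWithin_eq_iteratedFDerivWithin, iteratedDeriv_eq_iteratedFDeriv, ← h2, h3]

lemma taylor2_eval {f : ℝ → ℝ} {u : Set ℝ} (hu : IsOpen u) (hf : ContDiffOn ℝ 3 f u)
    {r : ℝ} (hr : 0 < r) (hsub : Set.Icc 0 r ⊆ u) (x : ℝ) :
    taylorWithinEval f 2 (Set.Icc 0 r) 0 x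
      = f 0 + x * deriv f 0 + x ^ 2 / 2 * iteratedDeriv 2 f 0 := by
  rw [taylor_within_apply]
  have h0 : (0:ℝ) ∈ Set.Icc 0 r := ⟨le_refl 0, hr.le⟩
  have e0 := iterDWithin_Icc_eq hu hf hr hsub h0 (k := 0) (by norm_num)
  have e1 := iterDWithin_Icc_eq hu hf hr hsub h0 (k := 1) (by norm_num)
  have e2 := iterDWithin_Icc_eq hu hf hr hsub h0 (k := 2) (by norm_num)
  rw [Finset.sum_range_succ, Finset.sum_range_succ, Finset.sum_range_one, e0, e1, e2]
  simp only [iteratedDeriv_zero, iteratedDeriv_one, smul_eq_mul, Nat.factorial_zero,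
    Nat.factorial_one, Nat.factorial_two, Nat.cast_ofNat, Nat.cast_one, sub_zero]
  show (1:ℝ)⁻¹ * x ^ 0 * f 0 + (1:ℝ)⁻¹ * x ^ 1 * deriv f 0 + ((2:ℕ):ℝ)⁻¹ * x ^ 2 * iteratedDeriv 2 f 0 = _
  push_cast
  ring

lemma symmDiffBound {f : ℝ → ℝ} {u : Set ℝ} (hu : IsOpen u) (hf : ContDiffOn ℝ 3 f u)
    {r : ℝ} (hr : 0 < r) (hsub : Set.Icc (-r) r ⊆ u) :
    ∃ M, ∀ δ ∈ Set.Ioc (0:ℝ) r, |f δ - f (-δ) - 2 * δ * deriv f 0| ≤ M * δ ^ 3 := by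
  have hsub1 : Set.Icc 0 r ⊆ u := fun t ht => hsub ⟨le_trans (by linarith [hr]) ht.1, ht.2⟩
  obtain ⟨C₁, h₁⟩ := exists_taylor_mean_remainder_bound (n := 2) hr.le (hf.mono hsub1)
  set ψ : ℝ → ℝ := fun t => f (-t) with hψ
  have hpre : IsOpen ((fun t : ℝ => -t) ⁻¹' u) := hu.preimage continuous_neg
  have hψu : ContDiffOn ℝ 3 ψ ((fun t : ℝ => -t) ⁻¹' u) :=
    hf.comp (contDiff_neg.contDiffOn) (fun x hx => hx)
  have hsub2 : Set.Icc (0:ℝ) r ⊆ ((fun t : ℝ => -t) ⁻¹' u) := by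
    intro t ht
    simp only [Set.mem_preimage]
    exact hsub ⟨by linarith [ht.2], by linarith [ht.1, hr]⟩
  obtain ⟨C₂, h₂⟩ := exists_taylor_mean_remainder_bound (n := 2) hr.le (hψu.mono hsub2)
  refine ⟨C₁ + C₂, fun δ hδ => ?_⟩
  have hδm : δ ∈ Set.Icc (0:ℝ) r := ⟨hδ.1.le, hδ.2⟩
  have T1 := taylor2_eval hu hf hr hsub1 δ
  have T2 := taylor2_eval hpre hψu hr hsub2 δ
  have hd1 : deriv ψ 0 = - deriv f 0 := by
    have := iteratedDeriv_comp_neg 1 f 0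
    simpa [iteratedDeriv_one, hψ] using this
  have hd2 : iteratedDeriv 2 ψ 0 = iteratedDeriv 2 f 0 := by
    have := iteratedDeriv_comp_neg 2 f 0
    simpa [hψ] using this
  have b1 := h₁ δ hδm
  have b2 := h₂ δ hδm
  rw [T1] at b1
  rw [T2, hd1, hd2] at b2
  have hψ0 : ψ 0 = f 0 := by simp [hψ]
  have key : f δ - f (-δ) - 2 * δ * deriv f 0
      = (f δ - (f 0 + δ * deriv f 0 + δ ^ 2 / 2 * iteratedDeriv 2 f 0))
        - (ψ δ - (ψ 0 + δ * (-deriv f 0) + δ ^ 2 / 2 * iteratedDeriv 2 f 0)) := by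
    simp only [hψ0]
    have : ψ δ = f (-δ) := rfl
    rw [this]; ring
  rw [key]
  have habs : |(f δ - (f 0 + δ * deriv f 0 + δ ^ 2 / 2 * iteratedDeriv 2 f 0))
        - (ψ δ - (ψ 0 + δ * (-deriv f 0) + δ ^ 2 / 2 * iteratedDeriv 2 f 0))|
      ≤ C₁ * δ ^ 3 + C₂ * δ ^ 3 := by
    refine (abs_sub _ _).trans ?_
    gcongr
    · simpa [Real.norm_eq_abs] using b1
    · simpa [Real.norm_eq_abs] using b2
  calc _ ≤ C₁ * δ ^ 3 + C₂ * δ ^ 3 := habs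
    _ = (C₁ + C₂) * δ ^ 3 := by ring

lemma sum_sign_mul {q : ℕ} (j i : Fin q) :
    ∑ b : Fin q → Bool, ((if b j then (1:ℝ) else -1) * (if b i then (1:ℝ) else -1))
      = if j = i then (2 ^ q : ℝ) else 0 := by
  rcases eq_or_ne j i with rfl | hne
  · rw [if_pos rfl]
    have : ∀ b : Fin q → Bool, ((if b j then (1:ℝ) else -1) * (if b j then (1:ℝ) else -1)) = 1 := by
      intro b; by_cases h : b j <;> simp [h]
    rw [Finset.sum_congr rfl (fun b _ => this b), Finset.sum_const, Finset.card_univ]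
    simp [Fintype.card_fun]
  · rw [if_neg hne]
    apply Finset.sum_involution (fun b _ => Function.update b j (!b j))
    · intro b _
      have hi : Function.update b j (!b j) i = b i := Function.update_of_ne (by simpa using (Ne.symm hne)) _ _
      have hj : Function.update b j (!b j) j = !b j := Function.update_self _ _ _
      rw [hi, hj]
      by_cases h : b j <;> by_cases h2 : b i <;> simp [h, h2]
    · intro b _ _
      intro hcontra
      have := congrFun hcontra j
      rw [Function.update_self] at this
      exact (Bool.not_ne_self (b j)) this
    · intro b _
      funext k
      rcases eq_or_ne k j with rfl | hk
      · simp [Function.update_self]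
      · simp [Function.update_of_ne hk]
    · intro b _; exact Finset.mem_univ _

lemma key_avg {q : ℕ} (d : Fin q → ℝ) (i : Fin q) :
    (1 / 2 ^ q : ℝ) * ∑ b : Fin q → Bool,
      (∑ j, d j * (if b j then (1:ℝ) else -1)) * (if b i then (1:ℝ) else -1) = d i := by
  have : ∑ b : Fin q → Bool, (∑ j, d j * (if b j then (1:ℝ) else -1)) * (if b i then (1:ℝ) else -1)
      = ∑ j, d j * ∑ b : Fin q → Bool, ((if b j then (1:ℝ) else -1) * (if b i then (1:ℝ) else -1)) := by
    simp_rw [Finset.sum_mul, Finset.mul_sum]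
    rw [Finset.sum_comm]
    congr 1; funext j; congr 1; funext b; ring
  rw [this]
  have : ∀ j, d j * (∑ b : Fin q → Bool, ((if b j then (1:ℝ) else -1) * (if b i then (1:ℝ) else -1)))
      = d j * (if j = i then (2 ^ q : ℝ) else 0) := fun j => by rw [sum_sign_mul]
  rw [Finset.sum_congr rfl (fun j _ => this j)]
  simp only [mul_ite, mul_zero, Finset.sum_ite_eq', Finset.mem_univ, if_true]
  field_simp

lemma clm_pi_apply {q : ℕ} (L : (Fin q → ℝ) →L[ℝ] ℝ) (v : Fin q → ℝ) :
    L v = ∑ j, v j * L (Pi.single j 1) := by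
  have hv : v = ∑ j, Pi.single j (v j) := by
    rw [Finset.univ_sum_single]
  conv_lhs => rw [hv]
  rw [map_sum]
  refine Finset.sum_congr rfl fun j _ => ?_
  have : (Pi.single j (v j) : Fin q → ℝ) = v j • (Pi.single j (1:ℝ) : Fin q → ℝ) := by
    funext k
    rcases eq_or_ne k j with rfl | hk
    · simp
    · simp [Pi.single_eq_of_ne hk]
  rw [this, L.map_smul, smul_eq_mul]

lemma quad_expand {q : ℕ} (A : Matrix (Fin q) (Fin q) ℝ) (bv θ v : Fin q → ℝ) (c : ℝ) :
    dotProduct (θ + v) (A.mulVec (θ + v)) + dotProduct bv (θ + v) + c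
      = (dotProduct θ (A.mulVec θ) + dotProduct bv θ + c)
        + (Matrix.vecMul θ A + A.mulVec θ + bv) ⬝ᵥ v + v ⬝ᵥ A.mulVec v := by
  have e2 : (A.mulVec θ) ⬝ᵥ v = v ⬝ᵥ A.mulVec θ := dotProduct_comm _ _
  simp only [Matrix.mulVec_add, dotProduct_add, add_dotProduct, ← Matrix.dotProduct_mulVec, e2]
  ring

lemma quad_fderiv {q : ℕ} (A : Matrix (Fin q) (Fin q) ℝ) (bv : Fin q → ℝ) (c : ℝ)
    (g : (Fin q → ℝ) → ℝ) (θ : Fin q → ℝ)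
    (hgq : g = fun x => dotProduct x (A.mulVec x) + dotProduct bv x + c)
    (hDg : DifferentiableAt ℝ g θ) (w : Fin q → ℝ) :
    fderiv ℝ g θ w = (Matrix.vecMul θ A + A.mulVec θ + bv) ⬝ᵥ w := by
  set W : Fin q → ℝ := Matrix.vecMul θ A + A.mulVec θ + bv with hW
  have hexp : ∀ t : ℝ, g (θ + t • w) = g θ + t * (W ⬝ᵥ w) + t ^ 2 * (w ⬝ᵥ A.mulVec w) := by
    intro t
    have h1 : g (θ + t • w) = g θ + W ⬝ᵥ (t • w) + (t • w) ⬝ᵥ A.mulVec (t • w) := by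
      rw [hgq]; exact quad_expand A bv θ (t • w) c
    rw [h1, Matrix.mulVec_smul, dotProduct_smul, smul_dotProduct, dotProduct_smul,
      smul_eq_mul, smul_eq_mul, smul_eq_mul]
    ring
  have hc : HasDerivAt (fun t : ℝ => θ + t • w) w 0 := by
    simpa using ((hasDerivAt_id (0:ℝ)).smul_const w).const_add θ
  have h0 : θ + (0:ℝ) • w = θ := by simp
  have hF : HasFDerivAt g (fderiv ℝ g θ) (θ + (0:ℝ) • w) := by rw [h0]; exact hDg.hasFDerivAt
  have h1 : HasDerivAt (fun t : ℝ => g (θ + t • w)) (fderiv ℝ g θ w) 0 :=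
    hF.comp_hasDerivAt 0 hc
  have h2 : HasDerivAt (fun t : ℝ => g θ + t * (W ⬝ᵥ w) + t ^ 2 * (w ⬝ᵥ A.mulVec w)) (W ⬝ᵥ w) 0 := by
    have ha := ((hasDerivAt_id (0:ℝ)).mul_const (W ⬝ᵥ w)).const_add (g θ)
    have hb := (hasDerivAt_pow 2 (0:ℝ)).mul_const (w ⬝ᵥ A.mulVec w)
    exact (ha.add hb).congr_deriv (by simp)
  have h3 : HasDerivAt (fun t : ℝ => g (θ + t • w)) (W ⬝ᵥ w) 0 := by
    have : (fun t : ℝ => g (θ + t • w)) = fun t : ℝ => g θ + t * (W ⬝ᵥ w) + t ^ 2 * (w ⬝ᵥ A.mulVec w) :=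
      funext hexp
    rw [this]; exact h2
  exact h1.unique h3

/-- Lemma 1 of Spall, 1992: for the simultaneous-perturbation estimator
`H_δ = (g(θ + δE) − g(θ − δE))/(2δ) · E⁻ᵀ` with `E` a vector of i.i.d. Rademacher signs
(so `E⁻¹ = E` coordinatewise and the expectation is the uniform average over all `2^q` sign
vectors), if `g` is three times continuously differentiable near `θ` then
`E[H_δ]ᵢ = ∂g/∂θᵢ(θ) + O(δ²)` as `δ → 0⁺`; and if `g` is a quadratic polynomial then
`E[H_δ] = ∇g(θ)` exactly for every `δ > 0`. -/
theorem stmt_13 {q : ℕ} (hq : 0 < q) (g : (Fin q → ℝ) → ℝ) (θ : Fin q → ℝ)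
    (s : Set (Fin q → ℝ)) (hs : s ∈ 𝓝 θ) (hg : ContDiffOn ℝ 3 g s)
    (e : (Fin q → Bool) → Fin q → ℝ)
    (he : e = fun b i => if b i then (1 : ℝ) else -1)
    (avg : ℝ → Fin q → ℝ)
    (havg : avg = fun δ i => (1 / 2 ^ q) *
      ∑ b : Fin q → Bool, (g (θ + δ • e b) - g (θ - δ • e b)) / (2 * δ) * e b i) :
    (∀ i, ∃ C > (0 : ℝ), ∀ᶠ δ in 𝓝[>] (0 : ℝ),
        |avg δ i - fderiv ℝ g θ (Pi.single i 1)| ≤ C * δ ^ 2) ∧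
      (∀ (A : Matrix (Fin q) (Fin q) ℝ) (bv : Fin q → ℝ) (c : ℝ),
        (g = fun x => dotProduct x (A.mulVec x) + dotProduct bv x + c) →
        ∀ δ > (0 : ℝ), ∀ i, avg δ i = fderiv ℝ g θ (Pi.single i 1)) := by
  have hθs : θ ∈ s := mem_of_mem_nhds hs
  have hDg : DifferentiableAt ℝ g θ :=
    ((hg.differentiableOn (by norm_num)) θ hθs).differentiableAt hs
  have hlin : ∀ v : Fin q → ℝ, fderiv ℝ g θ v = ∑ j, v j * fderiv ℝ g θ (Pi.single j 1) :=
    fun v => clm_pi_apply (fderiv ℝ g θ) v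
  have hEabs : ∀ b j, |e b j| ≤ 1 := by
    intro b j; rw [he]; by_cases hb : b j <;> simp [hb]
  constructor
  · -- Part 1
    intro i
    obtain ⟨u, hus, huo, hθu⟩ := mem_nhds_iff.mp hs
    have hgu : ContDiffOn ℝ 3 g u := hg.mono hus
    obtain ⟨ε, hε, hball⟩ := Metric.isOpen_iff.mp huo θ hθu
    set r := ε / 2 with hrdef
    have hr : 0 < r := by positivity
    have hEnorm : ∀ b, ‖e b‖ ≤ 1 := by
      intro b
      refine (pi_norm_le_iff_of_nonneg zero_le_one).mpr fun j => ?_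
      rw [Real.norm_eq_abs]; exact hEabs b j
    have hmem : ∀ (b) (t : ℝ), |t| ≤ r → θ + t • e b ∈ u := by
      intro b t ht
      apply hball
      rw [Metric.mem_ball, dist_eq_norm, add_sub_cancel_left, norm_smul, Real.norm_eq_abs]
      calc |t| * ‖e b‖ ≤ |t| * 1 := by
            exact mul_le_mul_of_nonneg_left (hEnorm b) (abs_nonneg t)
        _ = |t| := mul_one _
        _ ≤ r := ht
        _ < ε := by rw [hrdef]; linarith
    set φ : (Fin q → Bool) → ℝ → ℝ := fun b t => g (θ + t • e b) with hφdef
    have hcurve : ∀ b, ContDiff ℝ 3 (fun t : ℝ => θ + t • e b) :=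
      fun b => contDiff_const.add (contDiff_id.smul contDiff_const)
    have hopen : ∀ b, IsOpen ((fun t : ℝ => θ + t • e b) ⁻¹' u) :=
      fun b => huo.preimage (hcurve b).continuous
    have hφC : ∀ b, ContDiffOn ℝ 3 (φ b) ((fun t : ℝ => θ + t • e b) ⁻¹' u) :=
      fun b => hgu.comp ((hcurve b).contDiffOn) (fun t ht => ht)
    have hIccsub : ∀ b, Set.Icc (-r) r ⊆ ((fun t : ℝ => θ + t • e b) ⁻¹' u) :=
      fun b t ht => hmem b t (abs_le.mpr ⟨ht.1, ht.2⟩)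
    have hder : ∀ b, deriv (φ b) 0 = fderiv ℝ g θ (e b) := by
      intro b
      have hc : HasDerivAt (fun t : ℝ => θ + t • e b) (e b) 0 := by
        simpa using ((hasDerivAt_id (0:ℝ)).smul_const (e b)).const_add θ
      have h0 : θ + (0:ℝ) • e b = θ := by simp
      have hF : HasFDerivAt g (fderiv ℝ g θ) (θ + (0:ℝ) • e b) := by
        rw [h0]; exact hDg.hasFDerivAt
      exact (hF.comp_hasDerivAt 0 hc).deriv
    have hMex : ∀ b, ∃ M, ∀ δ ∈ Set.Ioc (0:ℝ) r,
        |φ b δ - φ b (-δ) - 2 * δ * deriv (φ b) 0| ≤ M * δ ^ 3 :=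
      fun b => symmDiffBound (hopen b) (hφC b) hr (hIccsub b)
    choose M hM using hMex
    refine ⟨(1 / 2 ^ q) * (∑ b, |M b|) / 2 + 1, by positivity, ?_⟩
    filter_upwards [Ioc_mem_nhdsGT hr] with δ hδ
    have hδ0 : (0:ℝ) < δ := hδ.1
    have havgi : avg δ i = (1 / 2 ^ q) * ∑ b, (φ b δ - φ b (-δ)) / (2 * δ) * e b i := by
      simp only [havg, hφdef, neg_smul, sub_eq_add_neg]
    have hkey : (1 / 2 ^ q : ℝ) * ∑ b, deriv (φ b) 0 * e b i
        = fderiv ℝ g θ (Pi.single i 1) := by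
      have hb : ∀ b, deriv (φ b) 0 = ∑ j, (fderiv ℝ g θ (Pi.single j 1)) * e b j := by
        intro b; rw [hder b, hlin (e b)]
        exact Finset.sum_congr rfl fun j _ => mul_comm _ _
      simp only [hb, he]
      exact key_avg (fun j => fderiv ℝ g θ (Pi.single j 1)) i
    have hstep : avg δ i - fderiv ℝ g θ (Pi.single i 1)
        = (1 / 2 ^ q) * ∑ b, ((φ b δ - φ b (-δ)) / (2 * δ) - deriv (φ b) 0) * e b i := by
      rw [havgi, ← hkey, ← mul_sub, ← Finset.sum_sub_distrib]
      congr 1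
      exact Finset.sum_congr rfl fun b _ => by ring
    rw [hstep]
    have habs1 : ∀ b, |((φ b δ - φ b (-δ)) / (2 * δ) - deriv (φ b) 0) * e b i|
        ≤ |M b| / 2 * δ ^ 2 := by
      intro b
      have h2 : |(φ b δ - φ b (-δ)) / (2 * δ) - deriv (φ b) 0| ≤ |M b| / 2 * δ ^ 2 := by
        have h3 := hM b δ ⟨hδ0, hδ.2⟩
        have h4 : (φ b δ - φ b (-δ)) / (2 * δ) - deriv (φ b) 0
            = (φ b δ - φ b (-δ) - 2 * δ * deriv (φ b) 0) / (2 * δ) := by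
          field_simp
        rw [h4, abs_div, abs_of_pos (by linarith : (0:ℝ) < 2 * δ),
          div_le_iff₀ (by linarith : (0:ℝ) < 2 * δ)]
        calc |φ b δ - φ b (-δ) - 2 * δ * deriv (φ b) 0| ≤ M b * δ ^ 3 := h3
          _ ≤ |M b| * δ ^ 3 :=
              mul_le_mul_of_nonneg_right (le_abs_self _) (by positivity)
          _ = |M b| / 2 * δ ^ 2 * (2 * δ) := by ring
      calc |((φ b δ - φ b (-δ)) / (2 * δ) - deriv (φ b) 0) * e b i|
          = |(φ b δ - φ b (-δ)) / (2 * δ) - deriv (φ b) 0| * |e b i| := abs_mul _ _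
        _ ≤ (|M b| / 2 * δ ^ 2) * 1 :=
            mul_le_mul h2 (hEabs b i) (abs_nonneg _) (by positivity)
        _ = |M b| / 2 * δ ^ 2 := mul_one _
    have h2q : (0:ℝ) < 1 / 2 ^ q := by positivity
    calc |(1 / 2 ^ q : ℝ) * ∑ b, ((φ b δ - φ b (-δ)) / (2 * δ) - deriv (φ b) 0) * e b i|
        = (1 / 2 ^ q) * |∑ b, ((φ b δ - φ b (-δ)) / (2 * δ) - deriv (φ b) 0) * e b i| := by
          rw [abs_mul, abs_of_pos h2q]
      _ ≤ (1 / 2 ^ q) * ∑ b, |((φ b δ - φ b (-δ)) / (2 * δ) - deriv (φ b) 0) * e b i| := by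
          exact mul_le_mul_of_nonneg_left (Finset.abs_sum_le_sum_abs _ _) h2q.le
      _ ≤ (1 / 2 ^ q) * ∑ b, |M b| / 2 * δ ^ 2 := by
          refine mul_le_mul_of_nonneg_left ?_ h2q.le
          exact Finset.sum_le_sum fun b _ => habs1 b
      _ = ((1 / 2 ^ q) * (∑ b, |M b|) / 2) * δ ^ 2 := by
          have hsum : ∑ b, |M b| / 2 * δ ^ 2 = (∑ b, |M b|) * (δ ^ 2 / 2) := by
            rw [Finset.sum_mul]
            exact Finset.sum_congr rfl fun b _ => by ring
          rw [hsum]; ring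
      _ ≤ ((1 / 2 ^ q) * (∑ b, |M b|) / 2 + 1) * δ ^ 2 := by
          exact mul_le_mul_of_nonneg_right (by linarith) (by positivity)
  · -- Part 2
    intro A bv c hgq δ hδ0 i
    have hfd : ∀ v, fderiv ℝ g θ v = (Matrix.vecMul θ A + A.mulVec θ + bv) ⬝ᵥ v :=
      quad_fderiv A bv c g θ hgq hDg
    subst hgq
    set W : Fin q → ℝ := Matrix.vecMul θ A + A.mulVec θ + bv with hWdef
    have hdp : ∀ v : Fin q → ℝ, W ⬝ᵥ v = ∑ j, W j * v j := fun v => rfl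
    have hdiffv : ∀ v : Fin q → ℝ,
        (fun x => dotProduct x (A.mulVec x) + dotProduct bv x + c) (θ + v)
          - (fun x => dotProduct x (A.mulVec x) + dotProduct bv x + c) (θ - v)
        = 2 * (W ⬝ᵥ v) := by
      intro v
      have h1 : (fun x => dotProduct x (A.mulVec x) + dotProduct bv x + c) (θ + v)
          = (fun x => dotProduct x (A.mulVec x) + dotProduct bv x + c) θ
            + W ⬝ᵥ v + v ⬝ᵥ A.mulVec v := quad_expand A bv θ v c
      have h2 : (fun x => dotProduct x (A.mulVec x) + dotProduct bv x + c) (θ - v)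
          = (fun x => dotProduct x (A.mulVec x) + dotProduct bv x + c) θ
            + W ⬝ᵥ (-v) + (-v) ⬝ᵥ A.mulVec (-v) := by
        rw [sub_eq_add_neg]
        exact quad_expand A bv θ (-v) c
      rw [h1, h2]
      simp only [Matrix.mulVec_neg, dotProduct_neg, neg_dotProduct, neg_neg]
      ring
    have hterm : ∀ b : Fin q → Bool,
        ((fun x => dotProduct x (A.mulVec x) + dotProduct bv x + c) (θ + δ • e b)
          - (fun x => dotProduct x (A.mulVec x) + dotProduct bv x + c) (θ - δ • e b)) / (2 * δ)
            * e b i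
        = (∑ j, W j * e b j) * e b i := by
      intro b
      rw [hdiffv (δ • e b), dotProduct_smul, smul_eq_mul, ← hdp]
      field_simp
    have hfin : avg δ i = (1 / 2 ^ q) * ∑ b, (∑ j, W j * e b j) * e b i := by
      rw [havg]
      exact congrArg _ (Finset.sum_congr rfl fun b _ => hterm b)
    rw [hfin, hfd (Pi.single i 1), hdp]
    have hsingle : ∑ j, W j * (Pi.single i 1 : Fin q → ℝ) j = W i := by
      simp [Pi.single_apply, mul_ite]
    rw [hsingle]
    simp only [he]
    exact key_avg W i
end

section
/- One-dimensional Robbins–Monro convergence in mean square: let h : ℝ → ℝ satisfy (x − x*)·(h(x) − y) ≥ μ(x − x*)² for all x, for some μ > 0, and |h(x) − y| ≤ L|x − x*|. Let φ_k = φ_{k−1} − γ_k (h(φ_{k−1}) − y + ξ_k) where ξ_k are independent mean-zero noises with Var(ξ_k) ≤ σ², and γ_k = a k^{−b}, b ∈ (1/2, 1], with 2aμ > 0. Then E[(φ_k − x*)²] → 0 as k → ∞, where x* is the unique solution of h(x) = y. -/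
open MeasureTheory ProbabilityTheory Filter Topology

lemma rm_sum_div (f g : ℕ → ℝ) (h : ∀ᶠ k in atTop, f k ≤ g k)
    (hf : Tendsto (fun n => ∑ j ∈ Finset.range n, f j) atTop atTop) :
    Tendsto (fun n => ∑ j ∈ Finset.range n, g j) atTop atTop := by
  obtain ⟨K, hK⟩ := eventually_atTop.1 h
  set C : ℝ := (∑ j ∈ Finset.range K, g j) - ∑ j ∈ Finset.range K, f j with hC
  have key : ∀ᶠ n in atTop, (∑ j ∈ Finset.range n, f j) + C ≤ ∑ j ∈ Finset.range n, g j := by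
    refine eventually_atTop.2 ⟨K, fun n hn => ?_⟩
    have h1 : ∑ j ∈ Finset.Ico K n, f j ≤ ∑ j ∈ Finset.Ico K n, g j :=
      Finset.sum_le_sum fun j hj => hK j (Finset.mem_Ico.1 hj).1
    rw [Finset.sum_Ico_eq_sub f hn, Finset.sum_Ico_eq_sub g hn] at h1
    simp only [hC]; linarith
  exact tendsto_atTop_mono' atTop key (tendsto_atTop_add_const_right atTop C hf)

lemma rm_chung (u c d : ℕ → ℝ) (hu0 : ∀ k, 0 ≤ u k)
    (hrec : ∀ k, u (k + 1) ≤ (1 - c (k + 1)) * u k + d (k + 1))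
    (hc01 : ∀ᶠ k in atTop, 0 ≤ c k ∧ c k ≤ 1)
    (hdiv : Tendsto (fun n => ∑ j ∈ Finset.range n, c j) atTop atTop)
    (hratio : ∀ ε : ℝ, 0 < ε → ∀ᶠ k in atTop, d k ≤ ε * c k) :
    Tendsto u atTop (𝓝 0) := by
  have key : ∀ ε : ℝ, 0 < ε → ∀ᶠ n in atTop, u n < ε := by
    intro ε hε
    set ε' : ℝ := ε / 2 with hε'
    have hε'pos : 0 < ε' := half_pos hε
    obtain ⟨K, hK⟩ := eventually_atTop.1 ((hc01.and (hratio ε' hε'pos)))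
    set v : ℕ → ℝ := fun k => max (u (K + k) - ε') 0 with hv
    have hv0 : ∀ k, 0 ≤ v k := fun k => le_max_right _ _
    have hvrec : ∀ k, v (k + 1) ≤ (1 - c (K + k + 1)) * v k := by
      intro k
      obtain ⟨⟨hc0, hc1⟩, hd⟩ := hK (K + k + 1) (by omega)
      have h1 : u (K + k + 1) - ε' ≤ (1 - c (K + k + 1)) * (u (K + k) - ε') := by
        have h2 := hrec (K + k)
        nlinarith
      have h3 : u (K + k) - ε' ≤ v k := le_max_left _ _
      have h4 : (0:ℝ) ≤ 1 - c (K + k + 1) := by linarith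
      show max (u (K + k + 1) - ε') 0 ≤ _
      exact max_le (h1.trans (mul_le_mul_of_nonneg_left h3 h4)) (mul_nonneg h4 (hv0 k))
    have hvexp : ∀ k, v k ≤ v 0 * Real.exp (-(∑ j ∈ Finset.range k, c (K + j + 1))) := by
      intro k
      induction k with
      | zero => simp
      | succ k ih =>
        have h5 : (1 - c (K + k + 1)) ≤ Real.exp (-(c (K + k + 1))) := by
          have := Real.add_one_le_exp (-(c (K + k + 1))); linarith
        calc v (k + 1) ≤ (1 - c (K + k + 1)) * v k := hvrec k
          _ ≤ Real.exp (-(c (K + k + 1))) * v k :=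
              mul_le_mul_of_nonneg_right h5 (hv0 k)
          _ ≤ Real.exp (-(c (K + k + 1))) * (v 0 * Real.exp (-(∑ j ∈ Finset.range k, c (K + j + 1)))) :=
              mul_le_mul_of_nonneg_left ih (Real.exp_nonneg _)
          _ = v 0 * Real.exp (-(∑ j ∈ Finset.range (k + 1), c (K + j + 1))) := by
              rw [Finset.sum_range_succ, neg_add, Real.exp_add]; ring
    -- divergence of the tail sums
    have htail : Tendsto (fun k => ∑ j ∈ Finset.range k, c (K + j + 1)) atTop atTop := by
      have heq : ∀ k, ∑ j ∈ Finset.range k, c (K + j + 1)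
          = (∑ j ∈ Finset.range (K + 1 + k), c j) - ∑ j ∈ Finset.range (K + 1), c j := by
        intro k
        rw [Finset.sum_range_add]
        simp only [add_sub_cancel_left]
        refine Finset.sum_congr rfl fun j _ => ?_
        congr 1; omega
      simp only [heq]
      have h6 : Tendsto (fun k : ℕ => K + 1 + k) atTop atTop := by
        simpa [Nat.add_comm] using tendsto_add_atTop_nat (K + 1)
      exact tendsto_atTop_add_const_right atTop _ (hdiv.comp h6)
    have hvlim : Tendsto v atTop (𝓝 0) := by
      have h7 : Tendsto (fun k => v 0 * Real.exp (-(∑ j ∈ Finset.range k, c (K + j + 1)))) atTop (𝓝 0) := by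
        have := (Real.tendsto_exp_atBot.comp (tendsto_neg_atBot_iff.2 htail)).const_mul (v 0)
        simpa using this
      exact squeeze_zero hv0 hvexp h7
    have h8 : ∀ᶠ k in atTop, v k < ε' := hvlim.eventually (gt_mem_nhds hε'pos)
    obtain ⟨k0, hk0⟩ := eventually_atTop.1 h8
    refine eventually_atTop.2 ⟨K + k0, fun n hn => ?_⟩
    have h9 : v (n - K) < ε' := hk0 (n - K) (by omega)
    have h10 : u (K + (n - K)) - ε' ≤ v (n - K) := le_max_left _ _
    have h11 : K + (n - K) = n := by omega
    rw [h11] at h10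
    have := hu0 n
    simp only [hε'] at h9 h10 ⊢
    linarith
  rw [tendsto_order]
  constructor
  · intro a ha
    filter_upwards with n
    exact lt_of_lt_of_le ha (hu0 n)
  · intro a ha
    exact key a ha

lemma rm_mul_integrable {Ω : Type*} [MeasureSpace Ω] {f g : Ω → ℝ}
    (hf : MemLp f 2 ℙ) (hg : MemLp g 2 ℙ) :
    Integrable (fun ω => f ω * g ω) ℙ := by
  have h1 : Integrable (fun ω => (f ω ^ 2 + g ω ^ 2) / 2) ℙ :=
    (hf.integrable_sq.add hg.integrable_sq).div_const 2
  refine Integrable.mono' h1 (hf.aestronglyMeasurable.mul hg.aestronglyMeasurable) ?_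
  filter_upwards with ω
  rw [Real.norm_eq_abs, abs_mul]
  nlinarith [abs_nonneg (f ω), abs_nonneg (g ω), sq_abs (f ω), sq_abs (g ω),
    sq_nonneg (|f ω| - |g ω|)]

/-- one-dimensional Robbins–Monro convergence in mean square.  Under strong
monotonicity `(x − x*)(h(x) − y) ≥ μ(x − x*)²` and linear growth `|h(x) − y| ≤ L|x − x*|`,
with independent mean-zero noises of variance ≤ σ² and step sizes `γ_k = a k^{−b}`,
`b ∈ (1/2, 1]`, the iterates `φ_k = φ_{k−1} − γ_k (h(φ_{k−1}) − y + ξ_k)` satisfy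
`E[(φ_k − x*)²] → 0`. -/
theorem stmt_16 {Ω : Type*} [MeasureSpace Ω] [IsProbabilityMeasure (ℙ : Measure Ω)]
    (h : ℝ → ℝ) (hmeas : Measurable h) (y xs μc L σ2 a b : ℝ)
    (hμ : 0 < μc) (hσ : 0 ≤ σ2) (ha : 0 < a) (hb1 : 1 / 2 < b) (hb2 : b ≤ 1)
    (hmono : ∀ x, μc * (x - xs) ^ 2 ≤ (x - xs) * (h x - y))
    (hLip : ∀ x, |h x - y| ≤ L * |x - xs|)
    (γ : ℕ → ℝ) (hγ : γ = fun k : ℕ => a * (k : ℝ) ^ (-b))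
    (ξ : ℕ → Ω → ℝ)
    (hξ2 : ∀ k, MemLp (ξ k) 2 ℙ)
    (hξmean : ∀ k, ∫ ω, ξ k ω = 0)
    (hξvar : ∀ k, ∫ ω, (ξ k ω) ^ 2 ≤ σ2)
    (φ : ℕ → Ω → ℝ) (φ₀ : ℝ) (hφ0 : φ 0 = fun _ => φ₀)
    (hξindep : ∀ k, IndepFun (φ k) (ξ (k + 1)) ℙ)
    (hrec : ∀ k, φ (k + 1) = fun ω =>
      φ k ω - γ (k + 1) * (h (φ k ω) - y + ξ (k + 1) ω)) :
    Tendsto (fun k => ∫ ω, (φ k ω - xs) ^ 2) atTop (𝓝 0) := by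
  have hb0 : 0 < b := lt_of_lt_of_le (by norm_num) (le_of_lt hb1)
  have hγ0 : ∀ k, 0 ≤ γ k := by
    intro k; rw [hγ]
    exact mul_nonneg ha.le (Real.rpow_nonneg (Nat.cast_nonneg k) _)
  -- `φ k` is in L²
  have hφ2 : ∀ k, MemLp (φ k) 2 ℙ := by
    intro k
    induction k with
    | zero => rw [hφ0]; exact memLp_const φ₀
    | succ k ih =>
      have he2 : MemLp (fun ω => φ k ω - xs) 2 ℙ := ih.sub (memLp_const xs)
      have hH2 : MemLp (fun ω => h (φ k ω) - y) 2 ℙ := by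
        refine MemLp.of_le_mul (c := L) he2 ?_ ?_
        · exact (aestronglyMeasurable_iff_aemeasurable).2
            (((hmeas.sub measurable_const)).comp_aemeasurable ih.aestronglyMeasurable.aemeasurable)
        · filter_upwards with ω
          simpa [Real.norm_eq_abs] using hLip (φ k ω)
      rw [hrec k]
      exact ih.sub ((hH2.add (hξ2 (k + 1))).const_mul (γ (k + 1)))
  -- the one-step mean-square inequality
  have hstep : ∀ k, (∫ ω, (φ (k + 1) ω - xs) ^ 2)
      ≤ (1 - (2 * μc * γ (k + 1) - L ^ 2 * γ (k + 1) ^ 2)) * (∫ ω, (φ k ω - xs) ^ 2)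
        + σ2 * γ (k + 1) ^ 2 := by
    intro k
    set g : ℝ := γ (k + 1) with hg
    set e : Ω → ℝ := fun ω => φ k ω - xs with he
    set H : Ω → ℝ := fun ω => h (φ k ω) - y with hH
    set Z : Ω → ℝ := ξ (k + 1) with hZ
    have he2 : MemLp e 2 ℙ := (hφ2 k).sub (memLp_const xs)
    have hH2 : MemLp H 2 ℙ := by
      refine MemLp.of_le_mul (c := L) he2 ?_ ?_
      · exact (aestronglyMeasurable_iff_aemeasurable).2
          (((hmeas.sub measurable_const)).comp_aemeasurable (hφ2 k).aestronglyMeasurable.aemeasurable)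
      · filter_upwards with ω
        simpa [Real.norm_eq_abs, he, hH] using hLip (φ k ω)
    have hZ2 : MemLp Z 2 ℙ := hξ2 (k + 1)
    have Ie2 : Integrable (fun ω => e ω ^ 2) ℙ := he2.integrable_sq
    have IH2 : Integrable (fun ω => H ω ^ 2) ℙ := hH2.integrable_sq
    have IZ2 : Integrable (fun ω => Z ω ^ 2) ℙ := hZ2.integrable_sq
    have IeH : Integrable (fun ω => e ω * H ω) ℙ := rm_mul_integrable he2 hH2
    have IeZ : Integrable (fun ω => e ω * Z ω) ℙ := rm_mul_integrable he2 hZ2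
    have IHZ : Integrable (fun ω => H ω * Z ω) ℙ := rm_mul_integrable hH2 hZ2
    have Ie : Integrable e ℙ := he2.integrable one_le_two
    have IH : Integrable H ℙ := hH2.integrable one_le_two
    have IZ : Integrable Z ℙ := hZ2.integrable one_le_two
    -- independence facts
    have hiez : IndepFun e Z ℙ :=
      (hξindep k).comp (measurable_id.sub measurable_const) measurable_id
    have hihz : IndepFun H Z ℙ :=
      (hξindep k).comp (hmeas.sub measurable_const) measurable_id
    have hEZ : ∫ ω, Z ω = 0 := hξmean (k + 1)
    have heZ0 : ∫ ω, e ω * Z ω = 0 := by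
      have h1 : ∫ ω, e ω * Z ω = (∫ ω, e ω) * ∫ ω, Z ω :=
        hiez.integral_mul_eq_mul_integral Ie.aestronglyMeasurable IZ.aestronglyMeasurable
      rw [h1, hEZ, mul_zero]
    have hHZ0 : ∫ ω, H ω * Z ω = 0 := by
      have h1 : ∫ ω, H ω * Z ω = (∫ ω, H ω) * ∫ ω, Z ω :=
        hihz.integral_mul_eq_mul_integral IH.aestronglyMeasurable IZ.aestronglyMeasurable
      rw [h1, hEZ, mul_zero]
    -- expansion of the square
    have hexpand : (fun ω => (φ (k + 1) ω - xs) ^ 2)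
        = fun ω => e ω ^ 2 - (2 * g) * (e ω * H ω) - (2 * g) * (e ω * Z ω)
            + g ^ 2 * (H ω ^ 2) + (2 * g ^ 2) * (H ω * Z ω) + g ^ 2 * (Z ω ^ 2) := by
      funext ω
      rw [hrec k]
      simp only [he, hH, hZ, hg]
      ring
    have i1 : ∫ ω, (e ω ^ 2 - (2 * g) * (e ω * H ω))
        = (∫ ω, e ω ^ 2) - (2 * g) * ∫ ω, e ω * H ω := by
      rw [integral_sub Ie2 (IeH.const_mul _), integral_const_mul]
    have I1 : Integrable (fun ω => e ω ^ 2 - (2 * g) * (e ω * H ω)) ℙ :=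
      Ie2.sub (IeH.const_mul _)
    have i2 : ∫ ω, (e ω ^ 2 - (2 * g) * (e ω * H ω) - (2 * g) * (e ω * Z ω))
        = (∫ ω, e ω ^ 2) - (2 * g) * (∫ ω, e ω * H ω) - (2 * g) * ∫ ω, e ω * Z ω := by
      rw [integral_sub I1 (IeZ.const_mul _), integral_const_mul, i1]
    have I2 : Integrable (fun ω => e ω ^ 2 - (2 * g) * (e ω * H ω) - (2 * g) * (e ω * Z ω)) ℙ :=
      I1.sub (IeZ.const_mul _)
    have i3 : ∫ ω, (e ω ^ 2 - (2 * g) * (e ω * H ω) - (2 * g) * (e ω * Z ω) + g ^ 2 * (H ω ^ 2))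
        = (∫ ω, e ω ^ 2) - (2 * g) * (∫ ω, e ω * H ω) - (2 * g) * (∫ ω, e ω * Z ω)
          + g ^ 2 * ∫ ω, H ω ^ 2 := by
      rw [integral_add I2 (IH2.const_mul _), integral_const_mul, i2]
    have I3 : Integrable (fun ω => e ω ^ 2 - (2 * g) * (e ω * H ω) - (2 * g) * (e ω * Z ω)
        + g ^ 2 * (H ω ^ 2)) ℙ := I2.add (IH2.const_mul _)
    have i4 : ∫ ω, (e ω ^ 2 - (2 * g) * (e ω * H ω) - (2 * g) * (e ω * Z ω) + g ^ 2 * (H ω ^ 2)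
          + (2 * g ^ 2) * (H ω * Z ω))
        = (∫ ω, e ω ^ 2) - (2 * g) * (∫ ω, e ω * H ω) - (2 * g) * (∫ ω, e ω * Z ω)
          + g ^ 2 * (∫ ω, H ω ^ 2) + (2 * g ^ 2) * ∫ ω, H ω * Z ω := by
      rw [integral_add I3 (IHZ.const_mul _), integral_const_mul, i3]
    have I4 : Integrable (fun ω => e ω ^ 2 - (2 * g) * (e ω * H ω) - (2 * g) * (e ω * Z ω)
        + g ^ 2 * (H ω ^ 2) + (2 * g ^ 2) * (H ω * Z ω)) ℙ := I3.add (IHZ.const_mul _)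
    have hsplit : (∫ ω, (φ (k + 1) ω - xs) ^ 2)
        = (∫ ω, e ω ^ 2) - (2 * g) * (∫ ω, e ω * H ω) - (2 * g) * (∫ ω, e ω * Z ω)
          + g ^ 2 * (∫ ω, H ω ^ 2) + (2 * g ^ 2) * (∫ ω, H ω * Z ω)
          + g ^ 2 * (∫ ω, Z ω ^ 2) := by
      rw [hexpand, integral_add I4 (IZ2.const_mul _), integral_const_mul, i4]
    rw [hsplit, heZ0, hHZ0]
    -- bounds
    have hgnn : 0 ≤ g := hγ0 (k + 1)
    have hU : ∫ ω, e ω ^ 2 = ∫ ω, (φ k ω - xs) ^ 2 := rfl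
    have hA : μc * (∫ ω, e ω ^ 2) ≤ ∫ ω, e ω * H ω := by
      rw [← integral_const_mul]
      exact integral_mono (Ie2.const_mul μc) IeH fun ω => hmono (φ k ω)
    have hB : (∫ ω, H ω ^ 2) ≤ L ^ 2 * ∫ ω, e ω ^ 2 := by
      rw [← integral_const_mul]
      refine integral_mono IH2 (Ie2.const_mul (L ^ 2)) fun ω => ?_
      have h1 : |H ω| ^ 2 ≤ (L * |e ω|) ^ 2 := pow_le_pow_left₀ (abs_nonneg _) (hLip (φ k ω)) 2
      calc H ω ^ 2 = |H ω| ^ 2 := (sq_abs _).symm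
        _ ≤ (L * |e ω|) ^ 2 := h1
        _ = L ^ 2 * e ω ^ 2 := by rw [mul_pow, sq_abs]
    have hC : (∫ ω, Z ω ^ 2) ≤ σ2 := hξvar (k + 1)
    have b1 : (2 * g) * (μc * ∫ ω, e ω ^ 2) ≤ (2 * g) * ∫ ω, e ω * H ω :=
      mul_le_mul_of_nonneg_left hA (by linarith)
    have b2 : g ^ 2 * (∫ ω, H ω ^ 2) ≤ g ^ 2 * (L ^ 2 * ∫ ω, e ω ^ 2) :=
      mul_le_mul_of_nonneg_left hB (sq_nonneg g)
    have b3 : g ^ 2 * (∫ ω, Z ω ^ 2) ≤ g ^ 2 * σ2 :=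
      mul_le_mul_of_nonneg_left hC (sq_nonneg g)
    rw [hU] at b1 b2 ⊢
    linarith [b1, b2, b3]
  -- nonnegativity
  have hu0 : ∀ k, 0 ≤ ∫ ω, (φ k ω - xs) ^ 2 := fun k => integral_nonneg fun ω => sq_nonneg _
  -- step sizes tend to 0
  have hγlim : Tendsto γ atTop (𝓝 0) := by
    rw [hγ]
    have h1 : Tendsto (fun x : ℝ => a * x ^ (-b)) atTop (𝓝 (a * 0)) :=
      (tendsto_rpow_neg_atTop hb0).const_mul a
    rw [mul_zero] at h1
    exact h1.comp tendsto_natCast_atTop_atTop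
  set c : ℕ → ℝ := fun j => 2 * μc * γ j - L ^ 2 * γ j ^ 2 with hc
  set d : ℕ → ℝ := fun j => σ2 * γ j ^ 2 with hd
  -- eventually γ is small
  have hev : ∀ δ : ℝ, 0 < δ → ∀ᶠ k in atTop, γ k < δ := fun δ hδ =>
    hγlim.eventually (gt_mem_nhds hδ)
  have hcγ : ∀ᶠ k in atTop, μc * γ k ≤ c k := by
    filter_upwards [hev (μc / (L ^ 2 + 1)) (by positivity)] with k hk
    have h1 : L ^ 2 * γ k ≤ μc := by
      have h2 : (0:ℝ) < L ^ 2 + 1 := by positivity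
      have h3 : L ^ 2 * γ k ≤ L ^ 2 * (μc / (L ^ 2 + 1)) := by
        rcases eq_or_lt_of_le (sq_nonneg L) with hL | hL
        · rw [← hL]; simp
        · exact mul_le_mul_of_nonneg_left hk.le (sq_nonneg L)
      have h4 : L ^ 2 * (μc / (L ^ 2 + 1)) ≤ μc := by
        rw [← mul_div_assoc, div_le_iff₀ h2]
        nlinarith [sq_nonneg L]
      linarith
    have := hγ0 k
    simp only [hc]
    nlinarith
  have hc01 : ∀ᶠ k in atTop, 0 ≤ c k ∧ c k ≤ 1 := by
    filter_upwards [hcγ, hev (1 / (2 * μc + 1)) (by positivity)] with k h1 h2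
    have hγk := hγ0 k
    constructor
    · have : 0 ≤ μc * γ k := mul_nonneg hμ.le hγk
      linarith
    · have h3 : 2 * μc * γ k ≤ 1 := by
        rw [lt_div_iff₀ (by positivity)] at h2
        nlinarith
      have h4 : 0 ≤ L ^ 2 * γ k ^ 2 := by positivity
      simp only [hc]
      linarith
  -- divergence of ∑ c
  have hγdiv : Tendsto (fun n => ∑ j ∈ Finset.range n, γ j) atTop atTop := by
    rw [← not_summable_iff_tendsto_nat_atTop_of_nonneg hγ0]
    intro hs
    have h1 : Summable (fun k : ℕ => a * (k : ℝ)⁻¹) := by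
      refine Summable.of_nonneg_of_le (fun k => by positivity) (fun k => ?_) hs
      rw [hγ]
      rcases Nat.eq_zero_or_pos k with rfl | hk
      · simp [Real.zero_rpow (neg_ne_zero.2 hb0.ne')]
      · have h2 : (1:ℝ) ≤ (k : ℝ) := by exact_mod_cast hk
        have h3 : ((k:ℝ)) ^ (-(1:ℝ)) ≤ (k:ℝ) ^ (-b) :=
          Real.rpow_le_rpow_of_exponent_le h2 (by linarith)
        rw [Real.rpow_neg_one] at h3
        exact mul_le_mul_of_nonneg_left h3 ha.le
    have h2 : Summable (fun k : ℕ => (k : ℝ)⁻¹) := by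
      have := h1.mul_left a⁻¹
      simpa [← mul_assoc, inv_mul_cancel₀ ha.ne'] using this
    exact Real.not_summable_natCast_inv h2
  have hμγdiv : Tendsto (fun n => ∑ j ∈ Finset.range n, μc * γ j) atTop atTop := by
    simp only [← Finset.mul_sum]
    exact hγdiv.const_mul_atTop hμ
  have hdiv : Tendsto (fun n => ∑ j ∈ Finset.range n, c j) atTop atTop :=
    rm_sum_div _ _ hcγ hμγdiv
  -- ratio condition
  have hratio : ∀ ε : ℝ, 0 < ε → ∀ᶠ k in atTop, d k ≤ ε * c k := by
    intro ε hε
    filter_upwards [hcγ, hev (ε * μc / (σ2 + 1)) (by positivity)] with k h1 h2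
    have hγk := hγ0 k
    have h3 : σ2 * γ k ≤ ε * μc := by
      rw [lt_div_iff₀ (by positivity)] at h2
      nlinarith
    have h4 : d k = (σ2 * γ k) * γ k := by simp only [hd]; ring
    rw [h4]
    calc (σ2 * γ k) * γ k ≤ (ε * μc) * γ k := mul_le_mul_of_nonneg_right h3 hγk
      _ = ε * (μc * γ k) := by ring
      _ ≤ ε * c k := mul_le_mul_of_nonneg_left h1 hε.le
  exact rm_chung _ c d hu0 (fun k => by
    have := hstep k
    simp only [hc, hd]
    linarith [this]) hc01 hdiv hratio
end
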